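/- Let δ ≥ 0 and p ∈ (1,∞), and for a ≥ 0 let φ_a be the shifted N-function with φ_a'(t) = (δ + a + t)^(p-2)·(a+t)·t/(a+t) (i.e. φ_a'(t) = φ'(a+t) t/(a+t) where φ'(s) = (δ+s)^(p-2)s), and let (φ_a)* be its Fenchel conjugate, (φ_a)*(s) = sup_{t≥0} (st - φ_a(t)). Then for every ε > 0 there exists c_ε ≥ 1, depending only on ε, p, and δ, such that for all t, s, a ≥ 0: s·t ≤ c_ε·(φ_a)*(s) + ε·φ_a(t). -/

import Mathlib

/-- The shifted N-function `φ_a(t) = ∫₀ᵗ φ'(a+s)·s/(a+s) ds`, where `φ'(t) = (δ+t)^(p-2) t`. -/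
noncomputable def shiftedN (δ p a : ℝ) (t : ℝ) : ℝ :=
  ∫ s in (0:ℝ)..t, (δ + (a + s)) ^ (p - 2) * (a + s) * (s / (a + s))

/-- The Fenchel conjugate of a function `f : ℝ → ℝ` over `t ≥ 0`:
`f*(s) = sup_{t ≥ 0} (s·t - f(t))`. -/
noncomputable def fenchel (f : ℝ → ℝ) (s : ℝ) : ℝ :=
  sSup {x : ℝ | ∃ t : ℝ, 0 ≤ t ∧ x = s * t - f t}

namespace EYoungAux

open Real MeasureTheory Set

/-- The simplified integrand `(κ + s) ^ (p - 2) * s`, with `κ = δ + a`. -/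
noncomputable def F (κ p s : ℝ) : ℝ := (κ + s) ^ (p - 2) * s

lemma F_nonneg {κ p : ℝ} (hκ : 0 ≤ κ) {s : ℝ} (hs : 0 ≤ s) : 0 ≤ F κ p s :=
  mul_nonneg (Real.rpow_nonneg (by linarith) _) hs

lemma F_contOn {κ p : ℝ} (hκ : 0 ≤ κ) (hp : 1 < p) : ContinuousOn (F κ p) (Ici 0) := by
  rcases hκ.lt_or_eq with h | h
  · apply ContinuousOn.mul _ continuousOn_id
    apply ContinuousOn.rpow_const ((continuous_const.add continuous_id).continuousOn)
    intro x hx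
    exact Or.inl (by show κ + x ≠ 0; exact ne_of_gt (by nlinarith [mem_Ici.mp hx]))
  · have he : EqOn (fun s : ℝ => s ^ (p - 1)) (F κ p) (Ici 0) := by
      intro s hs
      simp only [F, ← h, zero_add]
      rcases (mem_Ici.mp hs).lt_or_eq with h0 | h0
      · rw [← Real.rpow_add_one (ne_of_gt h0)]; ring_nf
      · rw [← h0, Real.zero_rpow (by linarith : p - 1 ≠ 0), mul_zero]
    exact ContinuousOn.congr
      (continuousOn_id.rpow_const fun x _ => Or.inr (by linarith)) he.symm

lemma F_intble {κ p : ℝ} (hκ : 0 ≤ κ) (hp : 1 < p) {b c : ℝ} (hb : 0 ≤ b) (hc : 0 ≤ c) :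
    IntervalIntegrable (F κ p) volume b c := by
  apply ((F_contOn hκ hp).mono _).intervalIntegrable
  intro x hx
  exact le_trans (le_min hb hc) hx.1

lemma integ_nonneg {κ p : ℝ} (hκ : 0 ≤ κ) {t : ℝ} (ht : 0 ≤ t) :
    0 ≤ ∫ s in (0:ℝ)..t, F κ p s :=
  intervalIntegral.integral_nonneg ht fun _u hu => F_nonneg hκ hu.1

lemma F_scale {κ p : ℝ} (hκ : 0 ≤ κ) (hp : 1 < p) {θ x : ℝ}
    (hθ0 : 0 < θ) (hθ1 : θ ≤ 1) (hx : 0 ≤ x) :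
    F κ p (θ * x) ≤ θ ^ (min 2 p - 1) * F κ p x := by
  rcases le_or_gt 2 p with h2 | h2
  · rw [min_eq_left h2]
    have hb : (κ + θ * x) ^ (p - 2) ≤ (κ + x) ^ (p - 2) := by
      apply Real.rpow_le_rpow (by nlinarith) (by nlinarith) (by linarith)
    have := mul_le_mul_of_nonneg_right hb (mul_nonneg hθ0.le hx)
    calc F κ p (θ * x) = (κ + θ * x) ^ (p - 2) * (θ * x) := rfl
      _ ≤ (κ + x) ^ (p - 2) * (θ * x) := this
      _ = θ * F κ p x := by unfold F; ring
      _ ≤ θ ^ ((2:ℝ) - 1) * F κ p x := by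
          rw [show (2:ℝ) - 1 = 1 by norm_num, Real.rpow_one]
  · rw [min_eq_right h2.le]
    rcases hx.lt_or_eq with hx0 | hx0
    · have hkx : (0:ℝ) < κ + x := by linarith
      have hb : (κ + θ * x) ^ (p - 2) ≤ (θ * (κ + x)) ^ (p - 2) := by
        apply Real.rpow_le_rpow_of_nonpos (by positivity) (by nlinarith) (by linarith)
      have hb2 : (θ * (κ + x)) ^ (p - 2) = θ ^ (p - 2) * (κ + x) ^ (p - 2) :=
        Real.mul_rpow hθ0.le hkx.le
      have h3 : F κ p (θ * x) ≤ θ ^ (p - 2) * (κ + x) ^ (p - 2) * (θ * x) := by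
        unfold F
        calc (κ + θ * x) ^ (p - 2) * (θ * x)
            ≤ (θ * (κ + x)) ^ (p - 2) * (θ * x) :=
              mul_le_mul_of_nonneg_right hb (by positivity)
          _ = θ ^ (p - 2) * (κ + x) ^ (p - 2) * (θ * x) := by rw [hb2]
      calc F κ p (θ * x) ≤ θ ^ (p - 2) * (κ + x) ^ (p - 2) * (θ * x) := h3
        _ = (θ ^ (p - 2) * θ) * F κ p x := by unfold F; ring
        _ = θ ^ (p - 1) * F κ p x := by
            rw [← Real.rpow_add_one (ne_of_gt hθ0)]; ring_nf
    · simp [F, ← hx0]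

lemma integ_scale {κ p : ℝ} (hκ : 0 ≤ κ) (hp : 1 < p) {θ t : ℝ}
    (hθ0 : 0 < θ) (hθ1 : θ ≤ 1) (ht : 0 ≤ t) :
    (∫ s in (0:ℝ)..θ * t, F κ p s) ≤ θ ^ min 2 p * ∫ s in (0:ℝ)..t, F κ p s := by
  have h1 : (∫ s in (0:ℝ)..θ * t, F κ p s) = θ * ∫ x in (0:ℝ)..t, F κ p (θ * x) := by
    have := intervalIntegral.smul_integral_comp_mul_left (a := 0) (b := t) (F κ p) θ
    rw [mul_zero] at this
    rw [← this, smul_eq_mul]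
  have hcomp : IntervalIntegrable (fun x => F κ p (θ * x)) volume 0 t := by
    apply ContinuousOn.intervalIntegrable
    apply (F_contOn hκ hp).comp ((continuous_const.mul continuous_id).continuousOn)
    intro x hx
    rw [uIcc_of_le ht] at hx
    show θ * x ∈ Ici 0
    exact mem_Ici.mpr (by nlinarith [hx.1])
  have h2 : (∫ x in (0:ℝ)..t, F κ p (θ * x)) ≤
      ∫ x in (0:ℝ)..t, θ ^ (min 2 p - 1) * F κ p x := by
    apply intervalIntegral.integral_mono_on ht hcomp
      ((F_intble hκ hp le_rfl ht).const_mul _)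
    intro x hx
    exact F_scale hκ hp hθ0 hθ1 hx.1
  rw [h1, intervalIntegral.integral_const_mul] at *
  calc θ * ∫ x in (0:ℝ)..t, F κ p (θ * x)
      ≤ θ * (θ ^ (min 2 p - 1) * ∫ x in (0:ℝ)..t, F κ p x) := by
        apply mul_le_mul_of_nonneg_left h2 hθ0.le
    _ = θ ^ min 2 p * ∫ x in (0:ℝ)..t, F κ p x := by
        rw [show min 2 p = (min 2 p - 1) + 1 by ring, Real.rpow_add_one (ne_of_gt hθ0)]
        ring

lemma F_lower {κ p : ℝ} (hκ : 0 ≤ κ) (hp : 1 < p) {u : ℝ} (hku : κ ≤ u) (hu0 : 0 < u) :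
    u ^ (p - 1) / 2 ≤ F κ p u := by
  rcases le_or_gt 2 p with h2 | h2
  · have hb : u ^ (p - 2) ≤ (κ + u) ^ (p - 2) :=
      Real.rpow_le_rpow hu0.le (by linarith) (by linarith)
    have : u ^ (p - 1) ≤ F κ p u := by
      unfold F
      rw [show p - 1 = (p - 2) + 1 by ring, Real.rpow_add_one (ne_of_gt hu0)]
      exact mul_le_mul_of_nonneg_right hb hu0.le
    nlinarith [Real.rpow_nonneg hu0.le (p - 1)]
  · have hb : (2 * u) ^ (p - 2) ≤ (κ + u) ^ (p - 2) :=
      Real.rpow_le_rpow_of_nonpos (by linarith) (by linarith) (by linarith)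
    have hb2 : (2 * u) ^ (p - 2) = 2 ^ (p - 2) * u ^ (p - 2) :=
      Real.mul_rpow (by norm_num) hu0.le
    have h12 : (1 : ℝ) / 2 ≤ 2 ^ (p - 2) := by
      have := Real.rpow_le_rpow_of_exponent_le (x := 2) (by norm_num)
        (by linarith : (-1 : ℝ) ≤ p - 2)
      rwa [Real.rpow_neg_one, show ((2:ℝ))⁻¹ = 1 / 2 by norm_num] at this
    have hup : 0 < u ^ (p - 2) := Real.rpow_pos_of_pos hu0 _
    have key : 1 / 2 * u ^ (p - 2) ≤ (κ + u) ^ (p - 2) := by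
      nlinarith
    have : 1 / 2 * (u ^ (p - 2) * u) ≤ F κ p u := by
      unfold F
      nlinarith
    rw [show p - 1 = (p - 2) + 1 by ring, Real.rpow_add_one (ne_of_gt hu0)]
    linarith

lemma bdd_elem {κ p s : ℝ} (hκ : 0 ≤ κ) (hp : 1 < p) (hs : 0 ≤ s) {t : ℝ} (ht : 0 ≤ t) :
    s * t - (∫ x in (0:ℝ)..t, F κ p x) ≤ s * max κ ((2 * s + 1) ^ (p - 1)⁻¹) := by
  set r := (2 * s + 1) ^ (p - 1)⁻¹ with hrdef
  have hr1 : (1 : ℝ) ≤ r := by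
    have h := Real.rpow_le_rpow (x := 1) (y := 2 * s + 1) (z := (p - 1)⁻¹)
      (by norm_num) (by linarith) (inv_nonneg.mpr (by linarith))
    rwa [Real.one_rpow] at h
  set R := max κ r with hRdef
  have hR0 : 0 < R := lt_of_lt_of_le one_pos (le_max_right _ _ |>.trans' hr1)
  have hRnn : 0 ≤ R := hR0.le
  have hφnn : ∀ b : ℝ, 0 ≤ b → 0 ≤ ∫ x in (0:ℝ)..b, F κ p x := by
    intro b hb
    exact intervalIntegral.integral_nonneg hb fun u hu =>
      mul_nonneg (Real.rpow_nonneg (by linarith [hu.1]) _) hu.1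
  rcases le_or_gt t R with h | h
  · have h1 : s * t ≤ s * R := mul_le_mul_of_nonneg_left h hs
    have := hφnn t ht
    linarith
  · have hsplit : (∫ x in (0:ℝ)..t, F κ p x)
        = (∫ x in (0:ℝ)..R, F κ p x) + ∫ x in R..t, F κ p x :=
      (intervalIntegral.integral_add_adjacent_intervals
        (F_intble hκ hp le_rfl hRnn) (F_intble hκ hp hRnn (by linarith))).symm
    have hmono : (∫ x in R..t, F κ p x) ≥ ∫ _x in R..t, s := by
      apply intervalIntegral.integral_mono_on h.le
        intervalIntegrable_const (F_intble hκ hp hRnn (by linarith))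
      intro u hu
      have hu0 : 0 < u := lt_of_lt_of_le hR0 hu.1
      have hru : r ≤ u := le_trans (le_max_right κ r) hu.1
      have hupow : 2 * s + 1 ≤ u ^ (p - 1) := by
        have : r ^ (p - 1) ≤ u ^ (p - 1) :=
          Real.rpow_le_rpow (by linarith) hru (by linarith)
        rwa [hrdef, Real.rpow_inv_rpow (by linarith) (by linarith : p - 1 ≠ 0)] at this
      have := F_lower hκ hp (le_trans (le_max_left κ r) hu.1) hu0
      linarith
    rw [intervalIntegral.integral_const, smul_eq_mul] at hmono
    have h0R := hφnn R hRnn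
    rw [hsplit]
    nlinarith

lemma shiftedN_eq {δ p a : ℝ} (ha : 0 ≤ a) {t : ℝ} (ht : 0 ≤ t) :
    shiftedN δ p a t = ∫ s in (0:ℝ)..t, F (δ + a) p s := by
  unfold shiftedN F
  apply intervalIntegral.integral_congr
  intro s hs
  rw [uIcc_of_le ht] at hs
  have hs0 : 0 ≤ s := hs.1
  rcases (by linarith : (0:ℝ) ≤ a + s).lt_or_eq with h | h
  · have hc : (a + s) * (s / (a + s)) = s := by
      field_simp
    show (δ + (a + s)) ^ (p - 2) * (a + s) * (s / (a + s)) = (δ + a + s) ^ (p - 2) * s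
    rw [mul_assoc, hc, ← add_assoc]
  · have ha0 : s = 0 := by linarith
    have haz : a = 0 := by linarith
    show (δ + (a + s)) ^ (p - 2) * (a + s) * (s / (a + s)) = (δ + a + s) ^ (p - 2) * s
    simp [ha0, haz]

end EYoungAux

open EYoungAux Real in
/-- ε-Young inequality for the family of shifted N-functions: for every `ε > 0`
there is `c_ε ≥ 1` (depending on `ε`, `p`, `δ`) such that
`s·t ≤ c_ε·(φ_a)*(s) + ε·φ_a(t)` for all `t, s, a ≥ 0`. -/
theorem epsilon_young (δ p : ℝ) (hδ : 0 ≤ δ) (hp : 1 < p) :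
    ∀ ε : ℝ, 0 < ε → ∃ c : ℝ, 1 ≤ c ∧
      ∀ t s a : ℝ, 0 ≤ t → 0 ≤ s → 0 ≤ a →
        s * t ≤ c * fenchel (shiftedN δ p a) s + ε * shiftedN δ p a t := by
  intro ε hε
  set q := min 2 p with hqdef
  have hq1 : 1 < q := lt_min one_lt_two hp
  set θ := min 1 (ε ^ (q - 1)⁻¹) with hθdef
  have hθ0 : 0 < θ := lt_min one_pos (Real.rpow_pos_of_pos hε _)
  have hθ1 : θ ≤ 1 := min_le_left _ _
  have hc1 : (1 : ℝ) ≤ θ⁻¹ := by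
    rw [le_inv_comm₀ one_pos hθ0, inv_one]; exact hθ1
  refine ⟨θ⁻¹, hc1, ?_⟩
  intro t s a ht hs ha
  have hκ : 0 ≤ δ + a := by linarith
  have hT : 0 ≤ θ * t := mul_nonneg hθ0.le ht
  have hbdd : BddAbove {x : ℝ | ∃ u : ℝ, 0 ≤ u ∧ x = s * u - shiftedN δ p a u} := by
    refine ⟨s * max (δ + a) ((2 * s + 1) ^ (p - 1)⁻¹), ?_⟩
    rintro x ⟨u, hu, rfl⟩
    rw [shiftedN_eq ha hu]
    exact bdd_elem hκ hp hs hu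
  have hmem : s * (θ * t) - shiftedN δ p a (θ * t)
      ∈ {x : ℝ | ∃ u : ℝ, 0 ≤ u ∧ x = s * u - shiftedN δ p a u} := ⟨θ * t, hT, rfl⟩
  have hle : s * (θ * t) - shiftedN δ p a (θ * t) ≤ fenchel (shiftedN δ p a) s :=
    le_csSup hbdd hmem
  have hscale : shiftedN δ p a (θ * t) ≤ θ ^ q * shiftedN δ p a t := by
    rw [shiftedN_eq ha hT, shiftedN_eq ha ht]
    exact integ_scale hκ hp hθ0 hθ1 ht
  have hφnn : 0 ≤ shiftedN δ p a t := by
    rw [shiftedN_eq ha ht]; exact integ_nonneg hκ ht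
  have hεq : θ ^ (q - 1) ≤ ε := by
    have h1 : θ ≤ ε ^ (q - 1)⁻¹ := min_le_right _ _
    calc θ ^ (q - 1) ≤ (ε ^ (q - 1)⁻¹) ^ (q - 1) :=
          Real.rpow_le_rpow hθ0.le h1 (by linarith)
      _ = ε := Real.rpow_inv_rpow hε.le (by linarith : q - 1 ≠ 0)
  have hpow : θ⁻¹ * θ ^ q = θ ^ (q - 1) := by
    rw [show q = (q - 1) + 1 by ring, Real.rpow_add_one (ne_of_gt hθ0)]
    field_simp
    ring_nf
  have step1 : s * (θ * t) ≤ fenchel (shiftedN δ p a) s + θ ^ q * shiftedN δ p a t := by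
    linarith
  have step2 : θ⁻¹ * (s * (θ * t)) ≤
      θ⁻¹ * (fenchel (shiftedN δ p a) s + θ ^ q * shiftedN δ p a t) :=
    mul_le_mul_of_nonneg_left step1 (by positivity)
  have hst : θ⁻¹ * (s * (θ * t)) = s * t := by
    field_simp
  rw [hst] at step2
  calc s * t ≤ θ⁻¹ * (fenchel (shiftedN δ p a) s + θ ^ q * shiftedN δ p a t) := step2
    _ = θ⁻¹ * fenchel (shiftedN δ p a) s + (θ⁻¹ * θ ^ q) * shiftedN δ p a t := by ring
    _ = θ⁻¹ * fenchel (shiftedN δ p a) s + θ ^ (q - 1) * shiftedN δ p a t := by rw [hpow]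
    _ ≤ θ⁻¹ * fenchel (shiftedN δ p a) s + ε * shiftedN δ p a t := by
        have := mul_le_mul_of_nonneg_right hεq hφnn
        linarith
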